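/- Let J(x) = 𝟙{|x|₁ = 1} on ℤ^d and m ∈ ℕ with m ≥ |x|₁ and m - |x|₁ even. Then J^{∗m}(x) ≤ m! · (2d)^{(m-|x|₁)/2}. -/

import Mathlib

/-- Convolution of two functions on `ℤ^d`: `(f ∗ g)(x) = ∑_y f(y) g(x - y)`. -/
noncomputable def convZd {d : ℕ} (f g : (Fin d → ℤ) → ℝ) (x : Fin d → ℤ) : ℝ :=
  ∑' y : Fin d → ℤ, f y * g (x - y)

/-- `J(x) = 𝟙{|x|₁ = 1}` on `ℤ^d`. -/
def Jfun (d : ℕ) (x : Fin d → ℤ) : ℝ :=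
  if (∑ i, (x i).natAbs) = 1 then 1 else 0

/-- The `m`-fold convolution `J^{∗m}`, with `J^{∗0} = δ₀` and `J^{∗1} = J`. -/
noncomputable def Jconv (d : ℕ) : ℕ → (Fin d → ℤ) → ℝ
  | 0 => fun x => if x = 0 then 1 else 0
  | n + 1 => convZd (Jfun d) (Jconv d n)

lemma Jfun_nonneg (d : ℕ) (x : Fin d → ℤ) : 0 ≤ Jfun d x := by
  unfold Jfun; split <;> norm_num

lemma Jconv_nonneg (d m : ℕ) (x : Fin d → ℤ) : 0 ≤ Jconv d m x := by
  induction m generalizing x with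
  | zero => show (0:ℝ) ≤ if x = 0 then 1 else 0; split <;> norm_num
  | succ m ih =>
    exact tsum_nonneg fun y => mul_nonneg (Jfun_nonneg d y) (ih _)

lemma sumAbs_single {d : ℕ} (i : Fin d) (c : ℤ) :
    ∑ j, ((Pi.single i c : Fin d → ℤ) j).natAbs = c.natAbs := by
  classical
  rw [Finset.sum_eq_single_of_mem i (Finset.mem_univ i)]
  · rw [Pi.single_eq_same]
  · intro j _ hj
    rw [Pi.single_eq_of_ne hj]
    simp

lemma sumAbs_sub_single {d : ℕ} (x : Fin d → ℤ) (i : Fin d) (c : ℤ) :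
    (∑ j, (x j - (Pi.single i c : Fin d → ℤ) j).natAbs) + (x i).natAbs
      = (∑ j, (x j).natAbs) + (x i - c).natAbs := by
  classical
  rw [← Finset.add_sum_erase _ (fun j => (x j - (Pi.single i c : Fin d → ℤ) j).natAbs)
        (Finset.mem_univ i),
      ← Finset.add_sum_erase _ (fun j => (x j).natAbs) (Finset.mem_univ i)]
  have h : ∀ j ∈ Finset.univ.erase i,
      (x j - (Pi.single i c : Fin d → ℤ) j).natAbs = (x j).natAbs := by
    intro j hj
    have hz : (Pi.single i c : Fin d → ℤ) j = 0 := by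
      rw [Pi.single_eq_of_ne (Finset.ne_of_mem_erase hj)]
    rw [hz, sub_zero]
  rw [Finset.sum_congr rfl h, Pi.single_eq_same]
  omega

lemma Jconv_eq_zero_of_lt (d m : ℕ) (x : Fin d → ℤ)
    (h : m < ∑ i, (x i).natAbs) : Jconv d m x = 0 := by
  induction m generalizing x with
  | zero =>
    have hx : x ≠ 0 := by
      intro h0
      subst h0
      simp at h
    show (if x = 0 then (1:ℝ) else 0) = 0
    simp [hx]
  | succ m ih =>
    show convZd (Jfun d) (Jconv d m) x = 0
    unfold convZd
    have hz : ∀ y : Fin d → ℤ, Jfun d y * Jconv d m (x - y) = 0 := by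
      intro y
      by_cases hy : (∑ i, (y i).natAbs) = 1
      · rw [ih (x - y) ?_, mul_zero]
        have htri : ∑ i, (x i).natAbs
            ≤ (∑ i, ((x - y) i).natAbs) + ∑ i, (y i).natAbs := by
          rw [← Finset.sum_add_distrib]
          apply Finset.sum_le_sum
          intro i _
          have : x i = (x - y) i + y i := by simp
          rw [this]
          exact Int.natAbs_add_le _ _
        omega
      · simp [Jfun, hy]
    simp only [hz]
    exact tsum_zero

lemma Jconv_succ (d m : ℕ) (x : Fin d → ℤ) :
    Jconv d (m+1) x =
      ∑ p ∈ Finset.univ ×ˢ ({1, -1} : Finset ℤ),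
        Jconv d m (x - Pi.single p.1 p.2) := by
  classical
  show convZd (Jfun d) (Jconv d m) x = _
  unfold convZd
  rw [tsum_eq_sum
    (s := (Finset.univ ×ˢ ({1, -1} : Finset ℤ)).image fun p => Pi.single p.1 p.2)]
  · rw [Finset.sum_image ?hinj]
    case hinj =>
      rintro ⟨i, c⟩ hp ⟨j, c'⟩ hq h
      have hc : c = 1 ∨ c = -1 := by
        simpa using (Finset.mem_product.mp hp).2
      have hij : i = j := by
        by_contra hne
        have := congrFun h i
        dsimp only at this
        rw [Pi.single_eq_same, Pi.single_eq_of_ne hne] at this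
        rcases hc with rfl | rfl <;> simp at this
      subst hij
      have := congrFun h i
      dsimp only at this
      rw [Pi.single_eq_same, Pi.single_eq_same] at this
      subst this
      rfl
    apply Finset.sum_congr rfl
    intro p hp
    have hc : p.2 = 1 ∨ p.2 = -1 := by
      simpa using (Finset.mem_product.mp hp).2
    have h1 : Jfun d (Pi.single p.1 p.2) = 1 := by
      unfold Jfun
      rw [sumAbs_single]
      rcases hc with h | h <;> simp [h]
    rw [h1, one_mul]
  · intro y hy
    by_cases h1 : (∑ i, (y i).natAbs) = 1
    · exfalso
      apply hy
      have hne : ∃ i, (y i).natAbs ≠ 0 := by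
        by_contra hall
        push_neg at hall
        rw [Finset.sum_eq_zero (fun i _ => hall i)] at h1
        exact one_ne_zero h1.symm
      obtain ⟨i, hi⟩ := hne
      have h2 : ∀ j, j ≠ i → (y j).natAbs = 0 := by
        intro j hj
        by_contra h0
        have h3 : (y j).natAbs + (y i).natAbs ≤ ∑ k, (y k).natAbs := by
          rw [← Finset.sum_pair (f := fun k => (y k).natAbs) hj]
          exact Finset.sum_le_sum_of_subset (Finset.subset_univ _)
        omega
      have hi1 : (y i).natAbs = 1 := by
        rw [Finset.sum_eq_single_of_mem i (Finset.mem_univ i)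
          (fun j _ hj => h2 j hj)] at h1
        exact h1
      have hyi : y = Pi.single i (y i) := by
        funext j
        by_cases hji : j = i
        · subst hji; rw [Pi.single_eq_same]
        · rw [Pi.single_eq_of_ne hji]
          exact Int.natAbs_eq_zero.mp (h2 j hji)
      apply Finset.mem_image.mpr
      refine ⟨(i, y i), ?_, hyi.symm⟩
      rw [Finset.mem_product]
      constructor
      · exact Finset.mem_univ i
      · simp only [Finset.mem_insert, Finset.mem_singleton]
        omega
    · simp [Jfun, h1]

set_option maxHeartbeats 1000000 in
/-- If `m ≥ |x|₁` and `m - |x|₁` is even, then `J^{∗m}(x) ≤ m! (2d)^{(m-|x|₁)/2}`. -/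
theorem Jconv_le_of_even (d m : ℕ) (x : Fin d → ℤ)
    (hm : (∑ i, (x i).natAbs) ≤ m) (heven : Even (m - ∑ i, (x i).natAbs)) :
    Jconv d m x ≤ (m.factorial : ℝ) * (2 * d : ℝ) ^ ((m - ∑ i, (x i).natAbs) / 2) := by
  induction m generalizing x with
  | zero =>
    have hs : ∑ i, (x i).natAbs = 0 := Nat.le_zero.mp hm
    have hx : x = 0 := by
      funext i
      exact Int.natAbs_eq_zero.mp (Finset.sum_eq_zero_iff.mp hs i (Finset.mem_univ i))
    rw [hs]
    show (if x = 0 then (1:ℝ) else 0) ≤ _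
    simp [hx, Nat.factorial]
  | succ m ih =>
    set n := ∑ i, (x i).natAbs with hn
    obtain ⟨t, ht⟩ := heven
    set k := (m + 1 - n) / 2 with hk
    have h2k : m + 1 - n = 2 * k := by omega
    set Bt : ℝ := (m.factorial : ℝ) * (2 * d : ℝ) ^ k with hBt
    set Ba : ℝ := if n + 1 ≤ m then (m.factorial : ℝ) * (2 * d : ℝ) ^ (k - 1) else 0
      with hBa
    have hBt0 : 0 ≤ Bt := by positivity
    have hBa0 : 0 ≤ Ba := by
      rw [hBa]; split
      · positivity
      · norm_num
    clear_value Bt Ba k n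
    have haway : ∀ (i : Fin d) (c : ℤ), c.natAbs = 1 →
        (x i).natAbs < (x i - c).natAbs →
        Jconv d m (x - Pi.single i c) ≤ Ba := by
      intro i c hc hlt
      have hrel := sumAbs_sub_single x i c
      have hn' : (∑ j, (((x - Pi.single i c) : Fin d → ℤ) j).natAbs) = n + 1 := by
        simp only [Pi.sub_apply]
        omega
      by_cases hcase : n + 1 ≤ m
      · have hev : Even (m - (n + 1)) := ⟨k - 1, by omega⟩
        have := ih (x - Pi.single i c) (by rw [hn']; exact hcase) (by rw [hn']; exact hev)
        rw [hn'] at this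
        have hexp : (m - (n + 1)) / 2 = k - 1 := by omega
        rw [hexp] at this
        rw [hBa, if_pos hcase]
        exact this
      · rw [hBa, if_neg hcase]
        have : Jconv d m (x - Pi.single i c) = 0 := by
          apply Jconv_eq_zero_of_lt
          rw [hn']
          omega
        rw [this]
    have htoward : ∀ (i : Fin d) (c : ℤ), c.natAbs = 1 →
        (x i - c).natAbs < (x i).natAbs →
        Jconv d m (x - Pi.single i c) ≤ Bt := by
      intro i c hc hlt
      have hrel := sumAbs_sub_single x i c
      have hn' : (∑ j, (((x - Pi.single i c) : Fin d → ℤ) j).natAbs) + 1 = n := by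
        simp only [Pi.sub_apply]
        omega
      have hle : (∑ j, (((x - Pi.single i c) : Fin d → ℤ) j).natAbs) ≤ m := by omega
      have hev : Even (m - ∑ j, (((x - Pi.single i c) : Fin d → ℤ) j).natAbs) := ⟨k, by omega⟩
      have := ih (x - Pi.single i c) hle hev
      have hexp : (m - ∑ j, (((x - Pi.single i c) : Fin d → ℤ) j).natAbs) / 2 = k := by omega
      rw [hexp] at this
      rw [hBt]
      exact this
    rw [Jconv_succ, Finset.sum_product]
    have key : ∀ i : Fin d,
        (∑ c ∈ ({1, -1} : Finset ℤ), Jconv d m (x - Pi.single i c))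
          ≤ (if x i = 0 then 0 else 1) * Bt + 2 * Ba := by
      intro i
      rw [Finset.sum_pair (by norm_num : (1:ℤ) ≠ -1)]
      rcases lt_trichotomy (x i) 0 with hxi | hxi | hxi
      · rw [if_neg (by omega)]
        have h1 : Jconv d m (x - Pi.single i 1) ≤ Ba :=
          haway i 1 (by norm_num) (by omega)
        have h2 : Jconv d m (x - Pi.single i (-1)) ≤ Bt :=
          htoward i (-1) (by norm_num) (by omega)
        linarith
      · rw [if_pos hxi]
        have h1 : Jconv d m (x - Pi.single i 1) ≤ Ba :=
          haway i 1 (by norm_num) (by omega)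
        have h2 : Jconv d m (x - Pi.single i (-1)) ≤ Ba :=
          haway i (-1) (by norm_num) (by omega)
        linarith
      · rw [if_neg (by omega)]
        have h1 : Jconv d m (x - Pi.single i 1) ≤ Bt :=
          htoward i 1 (by norm_num) (by omega)
        have h2 : Jconv d m (x - Pi.single i (-1)) ≤ Ba :=
          haway i (-1) (by norm_num) (by omega)
        linarith
    have hsum : (∑ i : Fin d, ∑ c ∈ ({1, -1} : Finset ℤ),
          Jconv d m (x - Pi.single i c))
        ≤ (∑ i : Fin d, (if x i = 0 then (0:ℝ) else 1)) * Bt + (2 * d) * Ba := by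
      calc (∑ i : Fin d, ∑ c ∈ ({1, -1} : Finset ℤ), Jconv d m (x - Pi.single i c))
          ≤ ∑ i : Fin d, ((if x i = 0 then (0:ℝ) else 1) * Bt + 2 * Ba) :=
            Finset.sum_le_sum fun i _ => key i
        _ = (∑ i : Fin d, (if x i = 0 then (0:ℝ) else 1)) * Bt + (2 * d) * Ba := by
            rw [Finset.sum_add_distrib, ← Finset.sum_mul, Finset.sum_const,
              Finset.card_univ, Fintype.card_fin]
            ring
    have hcnt : (∑ i : Fin d, (if x i = 0 then (0:ℝ) else 1)) ≤ (n : ℝ) := by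
      rw [hn]
      push_cast
      apply Finset.sum_le_sum
      intro i _
      split
      · positivity
      · rename_i h
        have : 1 ≤ (x i).natAbs := by omega
        exact_mod_cast this
    have hfinal : (∑ i : Fin d, (if x i = 0 then (0:ℝ) else 1)) * Bt + (2 * d) * Ba
        ≤ ((m+1).factorial : ℝ) * (2 * d : ℝ) ^ k := by
      have hcnt' : (∑ i : Fin d, (if x i = 0 then (0:ℝ) else 1)) * Bt ≤ (n : ℝ) * Bt :=
        mul_le_mul_of_nonneg_right hcnt hBt0
      by_cases hcase : n + 1 ≤ m
      · have hk1 : 1 ≤ k := by omega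
        have h2dBa : (2 * d : ℝ) * Ba = Bt := by
          rw [hBa, if_pos hcase, hBt]
          have hp : (2 * (d:ℝ)) ^ k = (2 * (d:ℝ)) ^ (k - 1) * (2 * (d:ℝ)) := by
            rw [← pow_succ, show k - 1 + 1 = k by omega]
          rw [hp]
          ring
        have hnn : (n : ℝ) + 1 ≤ (m : ℝ) + 1 := by
          have h' : (n : ℝ) ≤ (m : ℝ) := by exact_mod_cast (by omega : n ≤ m)
          linarith
        calc (∑ i : Fin d, (if x i = 0 then (0:ℝ) else 1)) * Bt + (2 * d) * Ba
            ≤ (n : ℝ) * Bt + Bt := by linarith [h2dBa, hcnt']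
          _ = ((n : ℝ) + 1) * Bt := by ring
          _ ≤ ((m : ℝ) + 1) * Bt := mul_le_mul_of_nonneg_right hnn hBt0
          _ = ((m+1).factorial : ℝ) * (2 * d : ℝ) ^ k := by
              rw [hBt, Nat.factorial_succ]
              push_cast
              ring
      · have hBaz : Ba = 0 := by rw [hBa, if_neg hcase]
        have hnn : (n : ℝ) ≤ (m : ℝ) + 1 := by exact_mod_cast hm
        calc (∑ i : Fin d, (if x i = 0 then (0:ℝ) else 1)) * Bt + (2 * d) * Ba
            = (∑ i : Fin d, (if x i = 0 then (0:ℝ) else 1)) * Bt := by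
              rw [hBaz]; ring
          _ ≤ (n : ℝ) * Bt := hcnt'
          _ ≤ ((m : ℝ) + 1) * Bt := mul_le_mul_of_nonneg_right hnn hBt0
          _ = ((m+1).factorial : ℝ) * (2 * d : ℝ) ^ k := by
              rw [hBt, Nat.factorial_succ]
              push_cast
              ring
    exact le_trans hsum hfinal
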